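/- Let X be a set and let G be a torsion subgroup of Equiv.Perm X (every element of G has finite order). Then the subgroup of Equiv.Perm X generated by G together with FAlt(X) is also torsion. -/

import Mathlib

open Pointwise


/-- `FAlt X`: the subgroup of `Equiv.Perm X` generated by all 3-cycles, i.e. by those
permutations whose support has exactly 3 elements. -/
def FAlt (X : Type*) : Subgroup (Equiv.Perm X) :=
  Subgroup.closure {σ : Equiv.Perm X | {x | σ x ≠ x}.ncard = 3}

lemma isOfFinOrder_of_finite_support {X : Type*} (σ : Equiv.Perm X)
    (h : {x | σ x ≠ x}.Finite) : IsOfFinOrder σ := by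
  have hp : ∀ x, σ x ≠ x ↔ σ (σ x) ≠ σ x := fun x => by
    simp [σ.injective.eq_iff]
  haveI : Finite {x | σ x ≠ x} := h
  set τ : Equiv.Perm {x | σ x ≠ x} := σ.subtypePerm (fun x => (hp x).symm) with hτ
  have hfin : IsOfFinOrder τ := isOfFinOrder_of_finite τ
  obtain ⟨n, hn, hone⟩ := hfin.exists_pow_eq_one
  refine isOfFinOrder_iff_pow_eq_one.2 ⟨n, hn, ?_⟩
  ext x
  by_cases hx : σ x = x
  · simp [Equiv.Perm.pow_apply_eq_self_of_apply_eq_self hx]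
  · have := congrArg (fun f => (f ⟨x, hx⟩ : X)) hone
    simpa [hτ, Equiv.Perm.subtypePerm_pow] using this

lemma fAlt_finite_support {X : Type*} {σ : Equiv.Perm X} (hσ : σ ∈ FAlt X) :
    {x | σ x ≠ x}.Finite := by
  induction hσ using Subgroup.closure_induction with
  | mem σ hσ =>
    simp only [Set.mem_setOf_eq] at hσ
    by_contra hinf
    rw [Set.Infinite.ncard hinf] at hσ
    simp at hσ
  | one => simp
  | mul σ τ _ _ hσ hτ =>
    refine ((hσ.union hτ).subset ?_)
    intro x hx
    by_cases h : τ x = x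
    · left; simpa [Equiv.Perm.mul_apply, h] using hx
    · right; exact h
  | inv σ _ hσ =>
    have : {x | σ⁻¹ x ≠ x} = {x | σ x ≠ x} := by
      ext x
      simp only [Set.mem_setOf_eq, ne_eq]
      rw [← σ.injective.eq_iff (a := σ⁻¹ x), Equiv.Perm.inv_def, Equiv.apply_symm_apply, eq_comm]
    rw [this]; exact hσ

lemma fAlt_normal (X : Type*) : (FAlt X).Normal := by
  constructor
  intro n hn g
  induction hn using Subgroup.closure_induction with
  | mem σ hσ =>
    apply Subgroup.subset_closure
    have himg : {x | (g * σ * g⁻¹ : Equiv.Perm X) x ≠ x} = g '' {x | σ x ≠ x} := by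
      ext x
      simp only [Set.mem_image, Set.mem_setOf_eq, Equiv.Perm.mul_apply]
      constructor
      · intro hx
        exact ⟨g⁻¹ x, by simpa using fun h => hx (by simp [h]), by simp⟩
      · rintro ⟨y, hy, rfl⟩
        simpa using fun h => hy (g.injective h)
    simp only [Set.mem_setOf_eq, himg]
    rw [Set.ncard_image_of_injective _ g.injective]
    exact hσ
  | one => simpa using Subgroup.one_mem _
  | mul a b _ _ ha hb =>
    have : g * (a * b) * g⁻¹ = (g * a * g⁻¹) * (g * b * g⁻¹) := by group
    rw [this]; exact Subgroup.mul_mem _ ha hb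
  | inv a _ ha =>
    have : g * a⁻¹ * g⁻¹ = (g * a * g⁻¹)⁻¹ := by group
    rw [this]; exact Subgroup.inv_mem _ ha

/-- If `G ≤ Sym X` is torsion, then `⟨G, FAlt X⟩` is torsion. -/
theorem isTorsion_sup_fAlt {X : Type*} (G : Subgroup (Equiv.Perm X))
    (htor : Monoid.IsTorsion ↥G) :
    Monoid.IsTorsion ↥(G ⊔ FAlt X) := by
  haveI := fAlt_normal X
  intro ⟨x, hx⟩
  have hx' : x ∈ (↑G * ↑(FAlt X) : Set (Equiv.Perm X)) := by
    rw [← Subgroup.mul_normal]; exact hx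
  obtain ⟨g, hg, f, hf, rfl⟩ := hx'
  -- g has finite order
  have hgord : IsOfFinOrder g := G.subtype.isOfFinOrder (htor ⟨g, hg⟩)
  obtain ⟨n, hn, hgn⟩ := hgord.exists_pow_eq_one
  -- (g*f)^n ∈ FAlt X
  have hmem : (g * f) ^ n ∈ FAlt X := by
    rw [← QuotientGroup.eq_one_iff]
    have : (QuotientGroup.mk (g * f) : Equiv.Perm X ⧸ FAlt X) = QuotientGroup.mk g := by
      rw [QuotientGroup.mk_mul, (QuotientGroup.eq_one_iff f).2 hf, mul_one]
    calc (QuotientGroup.mk ((g * f) ^ n) : Equiv.Perm X ⧸ FAlt X)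
        = (QuotientGroup.mk (g * f)) ^ n := by rfl
      _ = (QuotientGroup.mk g) ^ n := by rw [this]
      _ = QuotientGroup.mk (g ^ n) := rfl
      _ = 1 := by rw [hgn]; rfl
  have hford : IsOfFinOrder ((g * f) ^ n) :=
    isOfFinOrder_of_finite_support _ (fAlt_finite_support hmem)
  have : IsOfFinOrder (g * f) := hford.of_pow (Nat.pos_iff_ne_zero.mp hn)
  obtain ⟨m, hm, hmeq⟩ := this.exists_pow_eq_one
  refine isOfFinOrder_iff_pow_eq_one.2 ⟨m, hm, ?_⟩
  exact Subtype.ext (by simpa using hmeq)
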